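/- Let A be a type, Q a list of booleans (a quantifier prefix), and F₀, F₁ functions from A-tuples of length |Q| to 𝟛 that take only well-defined values. If IterQ(Q, fun v ↦ (U ∧ F₀ v) ∨ F₁ v) is well-defined, then IterQ(Q, fun v ↦ (U ∧ F₀ v) ∨ F₁ v) = IterQ(Q, F₁). -/

import Mathlib

/-- Kleene's strong three-valued logic: the three-element chain F < U < T. -/
inductive K3 : Type
  | F | U | T
deriving DecidableEq

instance : Fintype K3 := ⟨{K3.F, K3.U, K3.T}, fun x => by cases x <;> decide⟩

namespace K3

/-- Rank of a truth value in the chain F < U < T. -/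
def toFin : K3 → Fin 3
  | F => 0
  | U => 1
  | T => 2

instance : LinearOrder K3 := LinearOrder.lift' toFin (by decide)

/-- Kleene negation: swaps T and F, fixes U. -/
def neg : K3 → K3
  | F => T
  | U => U
  | T => F

/-- A truth value is well-defined if it is F or T. -/
def WellDefined (v : K3) : Prop := v = F ∨ v = T

end K3


instance : BoundedOrder K3 where
  top := K3.T
  bot := K3.F
  le_top x := by cases x <;> decide
  bot_le x := by cases x <;> decide

noncomputable instance : CompleteLinearOrder K3 :=
  Fintype.toCompleteLinearOrder K3

/-- Iterated quantification over a quantifier prefix `Q` (a list of booleans,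
`true` = existential = supremum, `false` = universal = infimum) of a 𝟛-valued
function on tuples of length `Q.length`. -/
noncomputable def IterQ {A : Type*} : (Q : List Bool) → ((Fin Q.length → A) → K3) → K3
  | [], G => G (fun i => i.elim0)
  | true :: Q', G => ⨆ a : A, IterQ Q' (fun v => G (Fin.cons a v))
  | false :: Q', G => ⨅ a : A, IterQ Q' (fun v => G (Fin.cons a v))

lemma K3.wd_iSup {I : Sort*} (f : I → K3) (h : ∀ i, K3.WellDefined (f i)) :
    K3.WellDefined (⨆ i, f i) := by
  rcases e : (⨆ i, f i) with _ | _ | _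
  · left; rfl
  · exfalso
    have hle : ∀ i, f i = K3.F := by
      intro i
      rcases h i with h' | h'
      · exact h'
      · exfalso
        have := le_iSup f i
        rw [e, h'] at this
        exact absurd this (by decide)
    have : (⨆ i, f i) ≤ K3.F := iSup_le fun i => (hle i).le
    rw [e] at this
    exact absurd this (by decide)
  · right; rfl

lemma K3.wd_iInf {I : Sort*} (f : I → K3) (h : ∀ i, K3.WellDefined (f i)) :
    K3.WellDefined (⨅ i, f i) := by
  rcases e : (⨅ i, f i) with _ | _ | _
  · left; rfl
  · exfalso
    have hle : ∀ i, f i = K3.T := by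
      intro i
      rcases h i with h' | h'
      · exfalso
        have := iInf_le f i
        rw [e, h'] at this
        exact absurd this (by decide)
      · exact h'
    have : K3.T ≤ (⨅ i, f i) := le_iInf fun i => (hle i).ge
    rw [e] at this
    exact absurd this (by decide)
  · right; rfl

lemma IterQ_mono {A : Type*} : ∀ (Q : List Bool) (F G : (Fin Q.length → A) → K3),
    (∀ v, F v ≤ G v) → IterQ Q F ≤ IterQ Q G
  | [], F, G, h => h _
  | true :: Q', F, G, h => iSup_mono fun a => IterQ_mono Q' _ _ fun v => h _
  | false :: Q', F, G, h => iInf_mono fun a => IterQ_mono Q' _ _ fun v => h _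

lemma IterQ_wd {A : Type*} : ∀ (Q : List Bool) (F : (Fin Q.length → A) → K3),
    (∀ v, K3.WellDefined (F v)) → K3.WellDefined (IterQ Q F)
  | [], F, h => h _
  | true :: Q', F, h => K3.wd_iSup _ fun a => IterQ_wd Q' _ fun v => h _
  | false :: Q', F, h => K3.wd_iInf _ fun a => IterQ_wd Q' _ fun v => h _

lemma IterQ_le_sup {A : Type*} : ∀ (Q : List Bool) (G F₁ : (Fin Q.length → A) → K3),
    (∀ v, G v ≤ K3.U ⊔ F₁ v) → IterQ Q G ≤ K3.U ⊔ IterQ Q F₁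
  | [], G, F₁, h => h _
  | true :: Q', G, F₁, h => by
      refine iSup_le fun a => le_trans (IterQ_le_sup Q' _ _ fun v => h _) ?_
      exact sup_le_sup_left (le_iSup (fun a => IterQ Q' fun v => F₁ (Fin.cons a v)) a) _
  | false :: Q', G, F₁, h => by
      rw [show (IterQ (false :: Q') F₁) = ⨅ a : A, IterQ Q' (fun v => F₁ (Fin.cons a v)) from rfl,
        sup_iInf_eq]
      exact le_iInf fun a => le_trans (iInf_le _ a) (IterQ_le_sup Q' _ _ fun v => h _)

/-- If `F₀` and `F₁` take only well-defined values and
`IterQ Q (fun v => (U ∧ F₀ v) ∨ F₁ v)` is well-defined, then it equals `IterQ Q F₁`. -/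
theorem kleene_quant_undef_elim {A : Type*} (Q : List Bool)
    (F₀ F₁ : (Fin Q.length → A) → K3)
    (h₀ : ∀ v, K3.WellDefined (F₀ v)) (h₁ : ∀ v, K3.WellDefined (F₁ v))
    (hwd : K3.WellDefined (IterQ Q (fun v => (K3.U ⊓ F₀ v) ⊔ F₁ v))) :
    IterQ Q (fun v => (K3.U ⊓ F₀ v) ⊔ F₁ v) = IterQ Q F₁ := by
  have hle : IterQ Q F₁ ≤ IterQ Q (fun v => (K3.U ⊓ F₀ v) ⊔ F₁ v) :=
    IterQ_mono Q _ _ fun v => le_sup_right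
  have hge : IterQ Q (fun v => (K3.U ⊓ F₀ v) ⊔ F₁ v) ≤ K3.U ⊔ IterQ Q F₁ := by
    refine IterQ_le_sup Q _ _ fun v => sup_le_sup inf_le_left le_rfl
  have hwd1 : K3.WellDefined (IterQ Q F₁) := IterQ_wd Q F₁ h₁
  rcases hwd with h | h <;> rcases hwd1 with h' | h' <;> rw [h, h'] <;>
    rw [h, h'] at hle hge <;> first | rfl | (exact absurd hle (by decide)) |
      (exact absurd hge (by decide))
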